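/- Monotonicity of the spectral radius: let E be a real Banach space with a closed proper generating convex cone C, and let A₁ and A₂ be positive compact bounded linear operators on E such that A₂ − A₁ is positive (i.e. (A₂ − A₁)(C) ⊆ C). Then r(A₂) ≥ r(A₁), where r denotes the spectral radius. -/

import Mathlib

open Filter

theorem spectral_radius_monotone
    {E : Type*} [NormedAddCommGroup E] [NormedSpace ℝ E] [CompleteSpace E]
    (C : Set E) (hC_closed : IsClosed C)
    (hC_add : ∀ x ∈ C, ∀ y ∈ C, x + y ∈ C)
    (hC_smul : ∀ t : ℝ, 0 ≤ t → ∀ x ∈ C, t • x ∈ C)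
    (hC_proper : C ∩ (-C) = {0})
    (hC_gen : ∀ x : E, ∃ y ∈ C, ∃ z ∈ C, x = y - z)
    (A₁ A₂ : E →L[ℝ] E)
    (hA₁_pos : ∀ x ∈ C, A₁ x ∈ C)
    (hA₂_pos : ∀ x ∈ C, A₂ x ∈ C)
    (hA₁_compact : IsCompactOperator A₁)
    (hA₂_compact : IsCompactOperator A₂)
    (hdiff_pos : ∀ x ∈ C, (A₂ - A₁) x ∈ C)
    (r₁ r₂ : ℝ)
    (hr₁ : Tendsto (fun k : ℕ => ‖A₁ ^ k‖ ^ ((k : ℝ)⁻¹)) atTop (nhds r₁))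
    (hr₂ : Tendsto (fun k : ℕ => ‖A₂ ^ k‖ ^ ((k : ℝ)⁻¹)) atTop (nhds r₂)) :
    r₁ ≤ r₂ := by
  by_contra hcon
  push_neg at hcon
  have hr₂0 : 0 ≤ r₂ :=
    le_of_tendsto_of_tendsto' tendsto_const_nhds hr₂
      (fun k => Real.rpow_nonneg (norm_nonneg _) _)
  set l : ℝ := (r₁ + r₂) / 2 with hl_def
  set l' : ℝ := (l + r₂) / 2 with hl'_def
  have hr₂l : r₂ < l := by rw [hl_def]; linarith
  have hll : l < r₁ := by rw [hl_def]; linarith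
  have hl_pos : 0 < l := lt_of_le_of_lt hr₂0 hr₂l
  have hr₂l' : r₂ < l' := by rw [hl'_def]; linarith
  have hl'l : l' < l := by rw [hl'_def]; linarith
  have hl'_pos : 0 < l' := lt_of_le_of_lt hr₂0 hr₂l'
  clear_value l' l
  -- 0 ∈ C
  have h0C : (0 : E) ∈ C := by
    have h : (0 : E) ∈ C ∩ (-C) := by rw [hC_proper]; exact Set.mem_singleton 0
    exact h.1
  -- powers of A₁, A₂ preserve the cone
  have hpow1 : ∀ k : ℕ, ∀ x ∈ C, (A₁ ^ k) x ∈ C := by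
    intro k
    induction k with
    | zero => intro x hx; simpa using hx
    | succ k ih =>
      intro x hx
      simp only [pow_succ, ContinuousLinearMap.mul_apply]
      exact ih _ (hA₁_pos x hx)
  have hpow2 : ∀ k : ℕ, ∀ x ∈ C, (A₂ ^ k) x ∈ C := by
    intro k
    induction k with
    | zero => intro x hx; simpa using hx
    | succ k ih =>
      intro x hx
      simp only [pow_succ, ContinuousLinearMap.mul_apply]
      exact ih _ (hA₂_pos x hx)
  -- domination: A₂^k x - A₁^k x ∈ C for x ∈ C
  have hdom : ∀ k : ℕ, ∀ x ∈ C, (A₂ ^ k) x - (A₁ ^ k) x ∈ C := by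
    intro k
    induction k with
    | zero => intro x hx; simpa using h0C
    | succ k ih =>
      intro x hx
      have key : (A₂ ^ (k + 1)) x - (A₁ ^ (k + 1)) x
          = (A₂ ^ k) ((A₂ - A₁) x) + ((A₂ ^ k) (A₁ x) - (A₁ ^ k) (A₁ x)) := by
        simp only [pow_succ, ContinuousLinearMap.mul_apply, ContinuousLinearMap.sub_apply,
          map_sub]
        abel
      rw [key]
      exact hC_add _ (hpow2 k _ (hdiff_pos x hx)) _ (ih (A₁ x) (hA₁_pos x hx))
  -- eventual bound for ‖A₂^k‖
  have hA₂b : ∀ᶠ k : ℕ in atTop, ‖A₂ ^ k‖ ≤ l' ^ k := by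
    have hev : ∀ᶠ k : ℕ in atTop, ‖A₂ ^ k‖ ^ ((k : ℝ)⁻¹) < l' :=
      hr₂.eventually_lt_const hr₂l'
    filter_upwards [hev, eventually_ge_atTop 1] with k hk hk1
    have hk0 : ((k : ℝ)) ≠ 0 := Nat.cast_ne_zero.mpr (by omega)
    calc ‖A₂ ^ k‖ = (‖A₂ ^ k‖ ^ ((k : ℝ)⁻¹)) ^ ((k : ℝ)) := by
          rw [← Real.rpow_mul (norm_nonneg _), inv_mul_cancel₀ hk0, Real.rpow_one]
    _ ≤ l' ^ ((k : ℝ)) :=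
          Real.rpow_le_rpow (Real.rpow_nonneg (norm_nonneg _) _) hk.le (Nat.cast_nonneg k)
    _ = l' ^ k := Real.rpow_natCast _ _
  -- Step A: Baire category gives a vector with unbounded l-normalized iterates
  have hstepA : ∃ w : E, ∀ M : ℝ, ∃ k : ℕ, M * l ^ k < ‖(A₁ ^ k) w‖ := by
    by_contra hA
    push_neg at hA
    set F : ℕ → Set E := fun n => {x | ∀ k : ℕ, ‖(A₁ ^ k) x‖ ≤ n * l ^ k} with hF
    have hFclosed : ∀ n, IsClosed (F n) := by
      intro n
      have hset : F n = ⋂ k : ℕ, {x | ‖(A₁ ^ k) x‖ ≤ n * l ^ k} := by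
        ext x; simp [hF]
      rw [hset]
      exact isClosed_iInter fun k => isClosed_le ((A₁ ^ k).continuous.norm) continuous_const
    have hFcover : ⋃ n, F n = Set.univ := by
      ext x
      simp only [Set.mem_iUnion, Set.mem_univ, iff_true]
      obtain ⟨M, hM⟩ := hA x
      exact ⟨⌈M⌉₊, fun k => (hM k).trans
        (mul_le_mul_of_nonneg_right (Nat.le_ceil M) (pow_pos hl_pos k).le)⟩
    obtain ⟨n, x₀, hx₀⟩ := nonempty_interior_of_iUnion_of_closed hFclosed hFcover
    obtain ⟨ρ, hρpos, hball⟩ := Metric.isOpen_iff.mp isOpen_interior x₀ hx₀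
    have hx₀F : x₀ ∈ F n := interior_subset hx₀
    set c : ℝ := max (4 * n / ρ) 1 with hc_def
    have hc1 : (1 : ℝ) ≤ c := le_max_right _ _
    have hc_pos : (0 : ℝ) < c := lt_of_lt_of_le one_pos hc1
    have hbound : ∀ k : ℕ, ‖A₁ ^ k‖ ≤ c * l ^ k := by
      intro k
      refine ContinuousLinearMap.opNorm_le_bound _ (by positivity) fun v => ?_
      rcases eq_or_ne v 0 with rfl | hv
      · simp
      · have hvpos : 0 < ‖v‖ := norm_pos_iff.mpr hv
        set d : E := (ρ / (2 * ‖v‖)) • v with hd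
        have hdnorm : ‖d‖ = ρ / 2 := by
          rw [hd, norm_smul, Real.norm_eq_abs, abs_of_pos (by positivity)]
          field_simp
        have hmem : x₀ + d ∈ F n := by
          apply interior_subset
          apply hball
          have h1 : x₀ + d - x₀ = d := by abel
          simp only [Metric.mem_ball, dist_eq_norm, h1, hdnorm]
          linarith
        have h1 : ‖(A₁ ^ k) d‖ ≤ 2 * n * l ^ k := by
          have h2 : (A₁ ^ k) d = (A₁ ^ k) (x₀ + d) - (A₁ ^ k) x₀ := by
            rw [map_add]; abel
          rw [h2]
          calc ‖(A₁ ^ k) (x₀ + d) - (A₁ ^ k) x₀‖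
              ≤ ‖(A₁ ^ k) (x₀ + d)‖ + ‖(A₁ ^ k) x₀‖ := norm_sub_le _ _
          _ ≤ n * l ^ k + n * l ^ k := add_le_add (hmem k) (hx₀F k)
          _ = 2 * n * l ^ k := by ring
        have h3 : (A₁ ^ k) v = (2 * ‖v‖ / ρ) • (A₁ ^ k) d := by
          rw [hd, map_smul, smul_smul,
            show (2 * ‖v‖ / ρ) * (ρ / (2 * ‖v‖)) = 1 by field_simp, one_smul]
        rw [h3, norm_smul, Real.norm_eq_abs, abs_of_pos (by positivity)]
        have h4 : 2 * ‖v‖ / ρ * ‖(A₁ ^ k) d‖ ≤ 2 * ‖v‖ / ρ * (2 * n * l ^ k) :=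
          mul_le_mul_of_nonneg_left h1 (by positivity)
        have h5 : 2 * ‖v‖ / ρ * (2 * n * l ^ k) = (4 * n / ρ) * l ^ k * ‖v‖ := by
          field_simp; ring
        have h6 : (4 * (n : ℝ) / ρ) * l ^ k * ‖v‖ ≤ c * l ^ k * ‖v‖ := by
          have h7 : (4 * (n : ℝ) / ρ) ≤ c := le_max_left _ _
          have := mul_le_mul_of_nonneg_right
            (mul_le_mul_of_nonneg_right h7 (pow_pos hl_pos k).le) hvpos.le
          linarith
        linarith
    -- deduce r₁ ≤ l, contradiction
    have hc_pow : Tendsto (fun k : ℕ => c ^ ((k : ℝ)⁻¹)) atTop (nhds 1) := by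
      have h0 : Tendsto (fun k : ℕ => ((k : ℝ))⁻¹) atTop (nhds 0) :=
        tendsto_inv_atTop_zero.comp tendsto_natCast_atTop_atTop
      have heq : (fun k : ℕ => c ^ ((k : ℝ)⁻¹))
          = fun k : ℕ => Real.exp (Real.log c * ((k : ℝ))⁻¹) := by
        funext k; rw [Real.rpow_def_of_pos hc_pos]
      rw [heq]
      have h2 : Tendsto (fun k : ℕ => Real.log c * ((k : ℝ))⁻¹) atTop (nhds 0) := by
        simpa using h0.const_mul (Real.log c)
      have := (Real.continuous_exp.tendsto 0).comp h2
      simpa [Function.comp_def] using this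
    have hle : r₁ ≤ 1 * l := by
      apply le_of_tendsto_of_tendsto hr₁ (hc_pow.mul tendsto_const_nhds)
      filter_upwards [eventually_ge_atTop 1] with k hk
      have hk0 : ((k : ℝ)) ≠ 0 := Nat.cast_ne_zero.mpr (by omega)
      calc ‖A₁ ^ k‖ ^ ((k : ℝ)⁻¹) ≤ (c * l ^ k) ^ ((k : ℝ)⁻¹) :=
            Real.rpow_le_rpow (norm_nonneg _) (hbound k) (by positivity)
      _ = c ^ ((k : ℝ)⁻¹) * l := by
            rw [Real.mul_rpow hc_pos.le (pow_pos hl_pos k).le]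
            congr 1
            rw [← Real.rpow_natCast l k, ← Real.rpow_mul hl_pos.le,
              mul_inv_cancel₀ hk0, Real.rpow_one]
    rw [one_mul] at hle
    linarith
  -- Step B: transfer unboundedness to a cone vector
  obtain ⟨w, hw⟩ := hstepA
  have hu : ∃ u ∈ C, ∀ M : ℝ, ∃ k : ℕ, M * l ^ k < ‖(A₁ ^ k) u‖ := by
    obtain ⟨y, hy, z, hz, hwyz⟩ := hC_gen w
    by_contra hno
    push_neg at hno
    obtain ⟨My, hMy⟩ := hno y hy
    obtain ⟨Mz, hMz⟩ := hno z hz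
    obtain ⟨k, hk⟩ := hw (My + Mz)
    have hb : ‖(A₁ ^ k) w‖ ≤ (My + Mz) * l ^ k := by
      rw [hwyz, map_sub]
      calc ‖(A₁ ^ k) y - (A₁ ^ k) z‖ ≤ ‖(A₁ ^ k) y‖ + ‖(A₁ ^ k) z‖ := norm_sub_le _ _
      _ ≤ My * l ^ k + Mz * l ^ k := add_le_add (hMy k) (hMz k)
      _ = (My + Mz) * l ^ k := by ring
    linarith
  obtain ⟨u, huC, hub⟩ := hu
  -- Step C: record indices
  have hrec : ∀ N : ℕ, ∃ k : ℕ, N ≤ k ∧ 1 ≤ k ∧ l ^ k ≤ ‖(A₁ ^ k) u‖ ∧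
      l * ‖(A₁ ^ (k - 1)) u‖ ≤ ‖(A₁ ^ k) u‖ := by
    intro N
    set s : ℕ → ℝ := fun i => ‖(A₁ ^ i) u‖ / l ^ i with hs
    have hne : (Finset.range (N + 1)).Nonempty := ⟨0, by simp⟩
    set B : ℝ := max 1 ((Finset.range (N + 1)).sup' hne s) with hB
    obtain ⟨m, hm⟩ := hub B
    have hBm : B < s m := by
      rw [hs]
      exact (lt_div_iff₀ (pow_pos hl_pos m)).mpr hm
    obtain ⟨k, hkmem, hkmax⟩ :=
      Finset.exists_max_image (Finset.range (m + 1)) s ⟨m, by simp⟩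
    have hkm : k ≤ m := Nat.lt_succ_iff.mp (Finset.mem_range.mp hkmem)
    have hsk : B < s k := lt_of_lt_of_le hBm (hkmax m (by simp))
    have hNk : N < k := by
      by_contra hle
      push_neg at hle
      have h1 : s k ≤ (Finset.range (N + 1)).sup' hne s :=
        Finset.le_sup' s (Finset.mem_range.mpr (by omega))
      have h2 : (Finset.range (N + 1)).sup' hne s ≤ B := le_max_right _ _
      linarith
    have hk1 : 1 ≤ k := by omega
    have hlow : l ^ k ≤ ‖(A₁ ^ k) u‖ := by
      have h1 : (1 : ℝ) ≤ s k := le_trans (le_max_left _ _) hsk.le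
      rw [hs] at h1
      have := (one_le_div (pow_pos hl_pos k)).mp h1
      linarith
    have hrecineq : l * ‖(A₁ ^ (k - 1)) u‖ ≤ ‖(A₁ ^ k) u‖ := by
      have h1 : s (k - 1) ≤ s k := hkmax (k - 1) (Finset.mem_range.mpr (by omega))
      rw [hs] at h1
      have h2 : ‖(A₁ ^ (k - 1)) u‖ * l ^ k ≤ ‖(A₁ ^ k) u‖ * l ^ (k - 1) :=
        (div_le_div_iff₀ (pow_pos hl_pos _) (pow_pos hl_pos _)).mp h1
      have hk' : k - 1 + 1 = k := Nat.succ_pred_eq_of_pos hk1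
      have h3 : l ^ k = l ^ (k - 1) * l := by rw [← pow_succ, hk']
      rw [h3] at h2
      have hppos : (0 : ℝ) < l ^ (k - 1) := pow_pos hl_pos _
      nlinarith
    exact ⟨k, hNk.le, hk1, hlow, hrecineq⟩
  choose k hkN hk1 hklow hkrec using hrec
  have hden : ∀ j : ℕ, 0 < ‖(A₁ ^ (k j)) u‖ :=
    fun j => lt_of_lt_of_le (pow_pos hl_pos _) (hklow j)
  set p : ℕ → E := fun j => (‖(A₁ ^ (k j)) u‖)⁻¹ • ((A₁ ^ (k j - 1)) u) with hp
  set x : ℕ → E := fun j => (‖(A₁ ^ (k j)) u‖)⁻¹ • ((A₁ ^ (k j)) u) with hx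
  set yv : ℕ → E := fun j => (‖(A₁ ^ (k j)) u‖)⁻¹ • ((A₂ ^ (k j)) u) with hy
  have hxnorm : ∀ j, ‖x j‖ = 1 := by
    intro j
    rw [hx]
    simp only [norm_smul, Real.norm_eq_abs, abs_of_pos (inv_pos.mpr (hden j))]
    exact inv_mul_cancel₀ (hden j).ne'
  have hstep : ∀ j, (A₁ ^ (k j)) u = A₁ ((A₁ ^ (k j - 1)) u) := by
    intro j
    have hk' : k j - 1 + 1 = k j := Nat.succ_pred_eq_of_pos (hk1 j)
    calc (A₁ ^ (k j)) u = (A₁ ^ (k j - 1 + 1)) u := by rw [hk']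
    _ = (A₁ * A₁ ^ (k j - 1)) u := by rw [pow_succ']
    _ = A₁ ((A₁ ^ (k j - 1)) u) := rfl
  have hxp : ∀ j, x j = A₁ (p j) := by
    intro j
    simp only [hx, hp, map_smul]
    rw [hstep j]
  have hpnorm : ∀ j, ‖p j‖ ≤ l⁻¹ := by
    intro j
    have h1 := mul_le_mul_of_nonneg_left (hkrec j) (inv_pos.mpr hl_pos).le
    rw [← mul_assoc, inv_mul_cancel₀ hl_pos.ne', one_mul] at h1
    have h2 : ‖p j‖ = ‖(A₁ ^ (k j)) u‖⁻¹ * ‖(A₁ ^ (k j - 1)) u‖ := by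
      rw [hp]
      simp [norm_smul, abs_of_pos (inv_pos.mpr (hden j))]
    rw [h2]
    calc ‖(A₁ ^ (k j)) u‖⁻¹ * ‖(A₁ ^ (k j - 1)) u‖
        ≤ ‖(A₁ ^ (k j)) u‖⁻¹ * (l⁻¹ * ‖(A₁ ^ (k j)) u‖) :=
          mul_le_mul_of_nonneg_left h1 (inv_nonneg.mpr (norm_nonneg _))
    _ = l⁻¹ := by
          rw [mul_comm l⁻¹, ← mul_assoc, inv_mul_cancel₀ (hden j).ne', one_mul]
  -- compactness: x j lies in a compact set
  have hK : IsCompact (closure (A₁ '' Metric.closedBall 0 l⁻¹)) :=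
    hA₁_compact.isCompact_closure_image_closedBall l⁻¹
  have hxK : ∀ j, x j ∈ closure (A₁ '' Metric.closedBall 0 l⁻¹) := by
    intro j
    apply subset_closure
    exact ⟨p j, Metric.mem_closedBall.mpr (by rw [dist_zero_right]; exact hpnorm j),
      (hxp j).symm⟩
  obtain ⟨a, haK, φ, hφ, hconv⟩ := hK.isSeqCompact hxK
  -- yv tends to 0
  have hyto : Tendsto yv atTop (nhds 0) := by
    have hbnd : ∀ᶠ j : ℕ in atTop, ‖yv j‖ ≤ ‖u‖ * (l' / l) ^ j := by
      obtain ⟨N₀, hN₀⟩ := eventually_atTop.mp hA₂b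
      filter_upwards [eventually_ge_atTop N₀] with j hj
      have hkj : N₀ ≤ k j := le_trans hj (hkN j)
      have h2 : ‖(A₂ ^ (k j)) u‖ ≤ l' ^ (k j) * ‖u‖ :=
        le_trans ((A₂ ^ (k j)).le_opNorm u)
          (mul_le_mul_of_nonneg_right (hN₀ _ hkj) (norm_nonneg u))
      have h3 : ‖yv j‖ = ‖(A₁ ^ (k j)) u‖⁻¹ * ‖(A₂ ^ (k j)) u‖ := by
        rw [hy]
        simp [norm_smul, abs_of_pos (inv_pos.mpr (hden j))]
      have h4 : ‖(A₁ ^ (k j)) u‖⁻¹ ≤ (l ^ (k j))⁻¹ := by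
        apply inv_anti₀ (pow_pos hl_pos _) (hklow j)
      calc ‖yv j‖ = ‖(A₁ ^ (k j)) u‖⁻¹ * ‖(A₂ ^ (k j)) u‖ := h3
      _ ≤ (l ^ (k j))⁻¹ * (l' ^ (k j) * ‖u‖) :=
            mul_le_mul h4 h2 (norm_nonneg _) (by positivity)
      _ = ‖u‖ * (l' / l) ^ (k j) := by rw [div_pow]; ring
      _ ≤ ‖u‖ * (l' / l) ^ j := by
            apply mul_le_mul_of_nonneg_left _ (norm_nonneg u)
            exact pow_le_pow_of_le_one (by positivity)
              ((div_le_one hl_pos).mpr hl'l.le) (hkN j)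
    have hgt : Tendsto (fun j : ℕ => ‖u‖ * (l' / l) ^ j) atTop (nhds 0) := by
      have h5 : Tendsto (fun j : ℕ => ((l' / l) ^ j : ℝ)) atTop (nhds 0) :=
        tendsto_pow_atTop_nhds_zero_of_lt_one (by positivity)
          ((div_lt_one hl_pos).mpr hl'l)
      simpa using h5.const_mul ‖u‖
    exact squeeze_zero_norm' hbnd hgt
  -- membership facts
  have hxC : ∀ j, x j ∈ C := fun j =>
    hC_smul _ (inv_nonneg.mpr (norm_nonneg _)) _ (hpow1 _ u huC)
  have haC : a ∈ C :=
    hC_closed.mem_of_tendsto hconv (Eventually.of_forall fun i => hxC (φ i))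
  have hdiffC : ∀ j, yv j - x j ∈ C := by
    intro j
    have hrw : yv j - x j
        = (‖(A₁ ^ (k j)) u‖)⁻¹ • ((A₂ ^ (k j)) u - (A₁ ^ (k j)) u) := by
      rw [hx, hy, smul_sub]
    rw [hrw]
    exact hC_smul _ (inv_nonneg.mpr (norm_nonneg _)) _ (hdom _ u huC)
  have hnegC : -a ∈ C := by
    have htend : Tendsto (fun i => yv (φ i) - x (φ i)) atTop (nhds (-a)) := by
      have h1 : Tendsto (fun i => yv (φ i)) atTop (nhds 0) :=
        hyto.comp hφ.tendsto_atTop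
      have h2 := h1.sub hconv
      rw [zero_sub] at h2
      exact h2
    exact hC_closed.mem_of_tendsto htend (Eventually.of_forall fun i => hdiffC (φ i))
  have ha0 : a = 0 := by
    have hmem : a ∈ C ∩ (-C) := ⟨haC, Set.mem_neg.mpr hnegC⟩
    rw [hC_proper] at hmem
    exact hmem
  have hanorm : ‖a‖ = 1 := by
    have h1 : Tendsto (fun i => ‖x (φ i)‖) atTop (nhds ‖a‖) :=
      (continuous_norm.tendsto a).comp hconv
    have h2 : (fun i => ‖x (φ i)‖) = fun _ => (1 : ℝ) :=
      funext fun i => hxnorm (φ i)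
    rw [h2] at h1
    exact (tendsto_nhds_unique tendsto_const_nhds h1).symm
  rw [ha0] at hanorm
  simp at hanorm
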